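/- For a formal power series with real coefficients $(a_k)_{k\ge 0}$, if for every sequence $(r_k)$ of positive reals satisfying $r_k r_\ell \ge r_{k+\ell}$ and $r_k t^k \to 0$ for all $t>0$ there exists $\varepsilon>0$ such that the sequence $(a_k r_k \varepsilon^k)_k$ is bounded, then the power series $\sum_k a_k t^k$ has positive radius of convergence. -/

import Mathlib

/-- If for every positive, submultiplicative (`rₖ r_ℓ ≥ r_{k+ℓ}`) sequence `(rₖ)` with
`rₖ tᵏ → 0` for all `t > 0` there is `ε > 0` such that `(aₖ rₖ εᵏ)` is bounded, then the
power series `∑ aₖ tᵏ` has positive radius of convergence. -/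
theorem stmt_1 (a : ℕ → ℝ)
    (h : ∀ r : ℕ → ℝ, (∀ k, 0 < r k) → (∀ k l, r (k + l) ≤ r k * r l) →
      (∀ t > (0 : ℝ), Filter.Tendsto (fun k => r k * t ^ k) Filter.atTop (nhds 0)) →
      ∃ ε > (0 : ℝ), ∃ C : ℝ, ∀ k, |a k * r k * ε ^ k| ≤ C) :
    ∃ t₀ > (0 : ℝ), Summable fun k => |a k| * t₀ ^ k := by
  by_contra hcon
  push_neg at hcon
  -- Step 1: coefficients are unbounded in a strong sense
  have claim : ∀ M : ℝ, 0 < M → ∀ N : ℕ, ∃ k, N ≤ k ∧ M ^ k ≤ |a k| := by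
    intro M hM N
    by_contra hc
    push_neg at hc
    have ht : (0 : ℝ) < 1 / (2 * M) := by positivity
    refine hcon _ ht ?_
    apply Summable.of_norm_bounded_eventually_nat (g := fun k => (1/2 : ℝ) ^ k)
      (summable_geometric_of_lt_one (by norm_num) (by norm_num))
    filter_upwards [Filter.eventually_ge_atTop N] with k hk
    have h1 : |a k| < M ^ k := hc k hk
    have h2 : (0:ℝ) ≤ (1 / (2*M)) ^ k := by positivity
    have h3 : ‖|a k| * (1 / (2 * M)) ^ k‖ = |a k| * (1 / (2 * M)) ^ k := by
      rw [Real.norm_eq_abs, abs_of_nonneg (by positivity)]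
    rw [h3]
    calc |a k| * (1 / (2 * M)) ^ k ≤ M ^ k * (1 / (2 * M)) ^ k := by
          exact mul_le_mul_of_nonneg_right h1.le h2
      _ = (M * (1 / (2 * M))) ^ k := by rw [mul_pow]
      _ = (1/2 : ℝ) ^ k := by
          congr 1
          field_simp
  -- Step 2: extract a rapidly growing subsequence
  have hMpos : ∀ j : ℕ, (0 : ℝ) < Real.exp (2 * (j + 1)) := fun j => Real.exp_pos _
  set F : ℕ → ℕ → ℕ := fun j N => (claim (Real.exp (2 * (j + 1))) (hMpos j) N).choose with hFdef
  have hF : ∀ j N, N ≤ F j N ∧ Real.exp (2 * (j + 1)) ^ (F j N) ≤ |a (F j N)| :=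
    fun j N => (claim (Real.exp (2 * (j + 1))) (hMpos j) N).choose_spec
  set kk : ℕ → ℕ := fun j => Nat.rec (F 0 1) (fun j ih => F (j + 1) (ih + 1)) j with hkkdef
  have kk0 : kk 0 = F 0 1 := rfl
  have kks : ∀ j, kk (j + 1) = F (j + 1) (kk j + 1) := fun j => rfl
  have hkk_lt : ∀ j, kk j < kk (j + 1) := by
    intro j
    rw [kks]
    exact lt_of_lt_of_le (Nat.lt_succ_self _) (hF (j + 1) (kk j + 1)).1
  have hkk_mono : StrictMono kk := strictMono_nat_of_lt_succ hkk_lt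
  have hkk_ge : ∀ j, j + 1 ≤ kk j := by
    intro j
    induction j with
    | zero => exact (hF 0 1).1
    | succ j ih =>
        have h1 := (hF (j + 1) (kk j + 1)).1
        rw [kks]
        omega
  have hkk_a : ∀ j : ℕ, Real.exp (2 * ((j : ℝ) + 1)) ^ (kk j) ≤ |a (kk j)| := by
    intro j
    cases j with
    | zero => exact (hF 0 1).2
    | succ j =>
        rw [kks]
        exact_mod_cast (hF (j + 1) (kk j + 1)).2
  -- Step 3: define g and r
  set g : ℕ → ℕ := fun k => ((Finset.range (k + 1)).filter (fun j => kk j ≤ k)).card with hgdef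
  have hg_mono : Monotone g := by
    intro k k' hkk'
    apply Finset.card_le_card
    intro i hi
    simp only [Finset.mem_filter, Finset.mem_range] at *
    omega
  have hg_kk : ∀ j, g (kk j) = j + 1 := by
    intro j
    have hset : (Finset.range (kk j + 1)).filter (fun i => kk i ≤ kk j)
        = Finset.range (j + 1) := by
      ext i
      simp only [Finset.mem_filter, Finset.mem_range]
      constructor
      · rintro ⟨_, h2⟩
        exact Nat.lt_succ_of_le (hkk_mono.le_iff_le.mp h2)
      · intro hi
        have hij : i ≤ j := Nat.lt_succ_iff.mp hi
        have hkj := hkk_ge j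
        exact ⟨by omega, hkk_mono.monotone hij⟩
    simp only [hgdef, hset, Finset.card_range]
  have hg_top : Filter.Tendsto g Filter.atTop Filter.atTop := by
    apply Filter.tendsto_atTop_atTop_of_monotone hg_mono
    intro b
    exact ⟨kk b, by rw [hg_kk]; omega⟩
  set r : ℕ → ℝ := fun k => Real.exp (-((k * g k : ℕ) : ℝ)) with hrdef
  have hr_pos : ∀ k, 0 < r k := fun k => Real.exp_pos _
  have hr_submul : ∀ k l, r (k + l) ≤ r k * r l := by
    intro k l
    rw [hrdef]
    simp only
    rw [← Real.exp_add, Real.exp_le_exp]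
    have h1 : k * g k + l * g l ≤ (k + l) * g (k + l) := by
      have hk := hg_mono (Nat.le_add_right k l)
      have hl := hg_mono (Nat.le_add_left l k)
      calc k * g k + l * g l ≤ k * g (k + l) + l * g (k + l) := by
            exact Nat.add_le_add (Nat.mul_le_mul_left k hk) (Nat.mul_le_mul_left l hl)
        _ = (k + l) * g (k + l) := by ring
    have h2 : ((k * g k + l * g l : ℕ) : ℝ) ≤ (((k + l) * g (k + l) : ℕ) : ℝ) := by
      exact_mod_cast h1
    push_cast at h2 ⊢
    linarith
  have hr_pow : ∀ k, r k = Real.exp (-(g k : ℝ)) ^ k := by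
    intro k
    rw [hrdef]
    simp only
    rw [← Real.exp_nat_mul]
    congr 1
    push_cast
    ring
  have hr_tend : ∀ t > (0 : ℝ), Filter.Tendsto (fun k => r k * t ^ k) Filter.atTop (nhds 0) := by
    intro t ht
    obtain ⟨n0, hn0⟩ := exists_nat_ge (Real.log (2 * t))
    have hexp_n0 : 2 * t ≤ Real.exp n0 := by
      calc 2 * t = Real.exp (Real.log (2 * t)) := (Real.exp_log (by positivity)).symm
        _ ≤ Real.exp n0 := Real.exp_le_exp.mpr hn0
    apply squeeze_zero' (g := fun k => (1/2 : ℝ) ^ k)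
    · filter_upwards with k
      have := hr_pos k
      positivity
    · filter_upwards [hg_top.eventually_ge_atTop n0] with k hk
      rw [hr_pow, ← mul_pow]
      apply pow_le_pow_left₀ (by positivity)
      have hgk : Real.exp (n0 : ℝ) ≤ Real.exp (g k : ℝ) := by
        rw [Real.exp_le_exp]; exact_mod_cast hk
      have h2t : 2 * t ≤ Real.exp (g k : ℝ) := le_trans hexp_n0 hgk
      rw [Real.exp_neg]
      rw [inv_mul_le_iff₀ (Real.exp_pos _)]
      nlinarith
    · exact tendsto_pow_atTop_nhds_zero_of_lt_one (by norm_num) (by norm_num)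
  -- Step 4: apply h and get a contradiction
  obtain ⟨ε, hε, C, hC⟩ := h r hr_pos hr_submul hr_tend
  obtain ⟨n1, hn1⟩ := exists_nat_ge (Real.log (2 / ε))
  obtain ⟨n2, hn2⟩ := exists_nat_gt C
  set j := max n1 n2 with hjdef
  set k := kk j with hkdef
  have hgj : g k = j + 1 := hg_kk j
  have hCk := hC k
  have habs : |a k * r k * ε ^ k| = |a k| * r k * ε ^ k := by
    rw [abs_mul, abs_mul, abs_of_pos (hr_pos k), abs_of_pos (pow_pos hε k)]
  rw [habs] at hCk
  -- lower bound
  have hrk : r k = Real.exp (-((j : ℝ) + 1)) ^ k := by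
    rw [hr_pow, hgj]
    push_cast
    ring_nf
  have hexp2 : Real.exp (2 * ((j : ℝ) + 1)) ^ k ≤ |a k| := hkk_a j
  have key : (Real.exp ((j : ℝ) + 1) * ε) ^ k ≤ |a k| * r k * ε ^ k := by
    have e1 : Real.exp (2 * ((j : ℝ) + 1)) ^ k * Real.exp (-((j : ℝ) + 1)) ^ k
        = Real.exp ((j : ℝ) + 1) ^ k := by
      rw [← mul_pow, ← Real.exp_add]
      congr 2
      ring
    calc (Real.exp ((j : ℝ) + 1) * ε) ^ k
        = Real.exp ((j : ℝ) + 1) ^ k * ε ^ k := by rw [mul_pow]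
      _ = Real.exp (2 * ((j : ℝ) + 1)) ^ k * Real.exp (-((j : ℝ) + 1)) ^ k * ε ^ k := by
          rw [e1]
      _ = Real.exp (2 * ((j : ℝ) + 1)) ^ k * r k * ε ^ k := by rw [hrk]
      _ ≤ |a k| * r k * ε ^ k := by
          apply mul_le_mul_of_nonneg_right _ (by positivity)
          exact mul_le_mul_of_nonneg_right hexp2 (le_of_lt (hr_pos k))
  -- (exp(j+1)*ε)^k ≥ 2^k
  have h2e : (2 : ℝ) ≤ Real.exp ((j : ℝ) + 1) * ε := by
    have hlog : Real.log (2 / ε) ≤ (j : ℝ) + 1 := by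
      have : (n1 : ℝ) ≤ (j : ℝ) := by exact_mod_cast Nat.le_max_left n1 n2
      linarith
    have : 2 / ε ≤ Real.exp ((j : ℝ) + 1) := by
      calc 2 / ε = Real.exp (Real.log (2 / ε)) := (Real.exp_log (by positivity)).symm
        _ ≤ Real.exp ((j : ℝ) + 1) := Real.exp_le_exp.mpr hlog
    calc (2 : ℝ) = (2 / ε) * ε := by field_simp
      _ ≤ Real.exp ((j : ℝ) + 1) * ε := mul_le_mul_of_nonneg_right this hε.le
  have h2k : (2 : ℝ) ^ k ≤ (Real.exp ((j : ℝ) + 1) * ε) ^ k :=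
    pow_le_pow_left₀ (by norm_num) h2e k
  have hCbig : C < (2 : ℝ) ^ k := by
    have hkn2 : n2 ≤ k := by
      have h1 : n2 ≤ j := Nat.le_max_right n1 n2
      have h2 := hkk_ge j
      omega
    have h3 : (n2 : ℝ) < (2 : ℝ) ^ n2 := by exact_mod_cast Nat.lt_two_pow_self (n := n2)
    have h4 : (2 : ℝ) ^ n2 ≤ (2 : ℝ) ^ k := pow_le_pow_right₀ (by norm_num) hkn2
    linarith
  linarith
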